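/- Let G₁ and G₂ be groups with automatic structures L₁ ⊆ A* for π₁ : A* → G₁ and L₂ ⊆ B* for π₂ : B* → G₂. Then the convolution L₁ ⋄ L₂ ⊆ C* is an automatic structure for the natural monoid homomorphism π₃ : C* → G₁ × G₂; in particular, the direct product of two automatic groups is automatic. -/

import Mathlib

open scoped NNReal

namespace Auto

/-- The generating set `Aπ ∪ (Aπ)⁻¹` of `G` determined by `π : A* → G`. -/
def gens {A G : Type*} [Group G] (π : FreeMonoid A →* G) : Set G :=
  (Set.range fun a : A => π (FreeMonoid.of a)) ∪
    Set.range fun a : A => (π (FreeMonoid.of a))⁻¹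

/-- The word metric `d_A` on `G`: the least `n` such that `g⁻¹h` is a product of `n`
elements of `Aπ ∪ (Aπ)⁻¹`. -/
noncomputable def wdist {A G : Type*} [Group G] (π : FreeMonoid A →* G) (g h : G) : ℕ :=
  sInf {n : ℕ | ∃ l : List G, l.length = n ∧ (∀ x ∈ l, x ∈ gens π) ∧ l.prod = g⁻¹ * h}

/-- Evaluation of a word of `A*` in `G`. -/
def evalW {A G : Type*} [Group G] (π : FreeMonoid A →* G) (w : List A) : G :=
  π (FreeMonoid.ofList w)

/-- `u` and `v` `p`-fellow travel: `d_A(u^[n]π, v^[n]π) ≤ p` for all `n`. -/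
def FellowTravel {A G : Type*} [Group G] (π : FreeMonoid A →* G) (p : ℝ≥0)
    (u v : List A) : Prop :=
  ∀ n : ℕ, (wdist π (evalW π (u.take n)) (evalW π (v.take n)) : ℝ≥0) ≤ p

/-- `u` and `v` are `p`-meeting-fellow-travellers. -/
def MFT {A G : Type*} [Group G] (π : FreeMonoid A →* G) (p : ℝ≥0) (u v : List A) : Prop :=
  FellowTravel π p u v ∧ evalW π u = evalW π v

/-- A language is regular if it is accepted by a finite-state automaton. -/
def IsRegular {A : Type*} (L : Language A) : Prop :=
  ∃ (σ : Type) (_ : Fintype σ) (M : DFA A σ), M.accepts = L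

/-- `L` is an automatic structure for `π`. -/
structure IsAutomaticStructure {A G : Type*} [Group G] (π : FreeMonoid A →* G)
    (L : Language A) : Prop where
  regular : IsRegular L
  onto : ∀ g : G, ∃ w ∈ L, evalW π w = g
  ft : ∃ N : ℕ, ∀ u ∈ L, ∀ v ∈ L,
    wdist π (evalW π u) (evalW π v) ≤ 1 → FellowTravel π N u v

/-- Evaluation of an element of `A ∪ {ε}`. -/
def evalOpt {A G : Type*} [Group G] (π : FreeMonoid A →* G) : Option A → G
  | none => 1
  | some a => π (FreeMonoid.of a)

/-- `L` is a biautomatic structure for `π`. -/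
structure IsBiautomaticStructure {A G : Type*} [Group G] (π : FreeMonoid A →* G)
    (L : Language A) extends IsAutomaticStructure π L : Prop where
  bi : ∃ N : ℕ, ∀ u ∈ L, ∀ v ∈ L, ∀ a : Option A,
    evalW π v = evalOpt π a * evalW π u →
    ∀ n : ℕ, wdist π (evalOpt π a * evalW π (u.take n)) (evalW π (v.take n)) ≤ N

/-- A language is factorial if it is closed under taking factors. -/
def IsFactorial {A : Type*} (L : Language A) : Prop :=
  ∀ u ∈ L, ∀ v : List A, v <:+: u → v ∈ L

/-- `D : ℝ≥0 → ℝ≥0` is a departure function for `(G, L)`. -/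
def IsDepartureFunction {A G : Type*} [Group G] (π : FreeMonoid A →* G) (L : Language A)
    (D : ℝ≥0 → ℝ≥0) : Prop :=
  ∀ w ∈ L, ∀ r : ℝ≥0, ∀ s t : ℕ, D r ≤ (t : ℝ≥0) → s + t ≤ w.length →
    r < (wdist π (evalW π (w.take s)) (evalW π (w.take (s + t))) : ℝ≥0)

/-- Every point of `S` is within distance `N` of `T`. -/
def NbhdIn {A G : Type*} [Group G] (π : FreeMonoid A →* G) (N : ℕ) (S T : Set G) : Prop :=
  ∀ s ∈ S, ∃ t ∈ T, wdist π s t ≤ N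

/-- The Hausdorff distance between `S` and `T` is at most `N`. -/
def HausdorffLE {A G : Type*} [Group G] (π : FreeMonoid A →* G) (N : ℕ)
    (S T : Set G) : Prop :=
  NbhdIn π N S T ∧ NbhdIn π N T S

/-- `H` is an `L`-quasiconvex subgroup of `G`. -/
def IsQuasiconvex {A G : Type*} [Group G] (π : FreeMonoid A →* G) (L : Language A)
    (H : Subgroup G) : Prop :=
  ∃ k : ℕ, ∀ h ∈ H, ∀ h' ∈ H, ∀ w ∈ L, h * evalW π w = h' →
    ∀ n : ℕ, ∃ z ∈ H, wdist π (h * evalW π (w.take n)) z ≤ k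

/-- The bounded reduction property for `(φ, L, L')`. -/
def BRP {A B G G' : Type*} [Group G] [Group G'] (π : FreeMonoid A →* G)
    (π' : FreeMonoid B →* G') (φ : G →* G') (L : Language A) (L' : Language B) : Prop :=
  ∃ N : ℕ, ∀ x : G, ∀ α ∈ L, ∀ β ∈ L', evalW π' β = φ (evalW π α) →
    HausdorffLE π' N (Set.range fun n : ℕ => φ (x * evalW π (α.take n)))
      (Set.range fun n : ℕ => φ x * evalW π' (β.take n))

/-- The synchronous bounded reduction property for `(φ, L, L')`. -/
def SyncBRP {A B G G' : Type*} [Group G] [Group G'] (π : FreeMonoid A →* G)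
    (π' : FreeMonoid B →* G') (φ : G →* G') (L : Language A) (L' : Language B) : Prop :=
  ∃ N : ℕ, ∀ x : G, ∀ α ∈ L, ∀ β ∈ L', evalW π' β = φ (evalW π α) →
    ∀ n : ℕ, wdist π' (φ (x * evalW π (α.take n))) (φ x * evalW π' (β.take n)) ≤ N

/-- The fellow traveller bounded reduction property (FT-BRP) for `(φ, L, L')`. -/
def FTBRP {A B G G' : Type*} [Group G] [Group G'] (π : FreeMonoid A →* G)
    (π' : FreeMonoid B →* G') (φ : G →* G') (L : Language A) (L' : Language B) : Prop :=
  ∀ p : ℝ≥0, ∃ q : ℝ≥0,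
    ∀ u₁ ∈ L, ∀ u₂ ∈ L, ∀ u₃ ∈ L, ∀ u₁' ∈ L', ∀ u₂' ∈ L', ∀ u₃' ∈ L',
      evalW π' u₁' = φ (evalW π u₁) → evalW π' u₂' = φ (evalW π u₂) →
        evalW π' u₃' = φ (evalW π u₃) →
          MFT π p (u₁ ++ u₂) u₃ → MFT π' q (u₁' ++ u₂') u₃'

/-- The natural homomorphism `(A ⊔ B)* → G` agreeing with `π₁` on `A` and `π₂` on `B`. -/
def sumHom {A B G : Type*} [Group G] (π₁ : FreeMonoid A →* G) (π₂ : FreeMonoid B →* G) :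
    FreeMonoid (A ⊕ B) →* G :=
  FreeMonoid.lift (Sum.elim (fun a => π₁ (FreeMonoid.of a)) fun b => π₂ (FreeMonoid.of b))

/-- The union `L₁ ∪ L₂` viewed as a language over `A ⊔ B`. -/
def unionLang {A B : Type*} (L₁ : Language A) (L₂ : Language B) : Language (A ⊕ B) :=
  {w : List (A ⊕ B) | (∃ u ∈ L₁, w = u.map Sum.inl) ∨ ∃ v ∈ L₂, w = v.map Sum.inr}

/-- `L` is an asynchronous automatic structure for `π`. -/
def IsAsyncAutomaticStructure {A G : Type*} [Group G] (π : FreeMonoid A →* G)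
    (L : Language A) : Prop :=
  IsRegular L ∧ (∀ g : G, ∃ w ∈ L, evalW π w = g) ∧
    ∃ p : ℕ, ∀ u ∈ L, ∀ v ∈ L, wdist π (evalW π u) (evalW π v) ≤ 1 →
      ∃ φ ψ : ℕ → ℕ, Monotone φ ∧ Monotone ψ ∧
        Function.Surjective φ ∧ Function.Surjective ψ ∧
          ∀ t : ℕ, wdist π (evalW π (u.take (φ t))) (evalW π (v.take (ψ t))) ≤ p

/-- `L₁` and `L₂` are equivalent automatic structures. -/
def LangEquivalent {A B G : Type*} [Group G] (π₁ : FreeMonoid A →* G)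
    (π₂ : FreeMonoid B →* G) (L₁ : Language A) (L₂ : Language B) : Prop :=
  IsAsyncAutomaticStructure (sumHom π₁ π₂) (unionLang L₁ L₂)

/-- `L₁` and `L₂` are synchronously equivalent automatic structures. -/
def LangSyncEquivalent {A B G : Type*} [Group G] (π₁ : FreeMonoid A →* G)
    (π₂ : FreeMonoid B →* G) (L₁ : Language A) (L₂ : Language B) : Prop :=
  IsAutomaticStructure (sumHom π₁ π₂) (unionLang L₁ L₂)

/-- `L` has the Hausdorff closeness property. -/
def HausClose {A G : Type*} [Group G] (π : FreeMonoid A →* G) (L : Language A) : Prop :=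
  ∃ N : ℕ, ∀ u ∈ L, ∀ v ∈ L, wdist π (evalW π u) (evalW π v) ≤ 1 →
    HausdorffLE π N (Set.range fun n : ℕ => evalW π (u.take n))
      (Set.range fun n : ℕ => evalW π (v.take n))

/-- The padded alphabet `C = (A×B) ∪ (A×{$}) ∪ ({$}×B)` of convolution. -/
abbrev ConvAlphabet (A B : Type*) := (A × B) ⊕ (A ⊕ B)

/-- The convolution `u ⋄ v` of two words. -/
def conv {A B : Type*} : List A → List B → List (ConvAlphabet A B)
  | [], [] => []
  | [], b :: v => Sum.inr (Sum.inr b) :: conv [] v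
  | a :: u, [] => Sum.inr (Sum.inl a) :: conv u []
  | a :: u, b :: v => Sum.inl (a, b) :: conv u v
  termination_by u v => u.length + v.length

/-- The convolution `L₁ ⋄ L₂` of two languages. -/
def convLang {A B : Type*} (L₁ : Language A) (L₂ : Language B) :
    Language (ConvAlphabet A B) :=
  {w : List (ConvAlphabet A B) | ∃ u ∈ L₁, ∃ v ∈ L₂, w = conv u v}

/-- The natural homomorphism `C* → G × G'` for the convolution alphabet. -/
def convHom {A B G G' : Type*} [Group G] [Group G'] (π₁ : FreeMonoid A →* G)
    (π₂ : FreeMonoid B →* G') : FreeMonoid (ConvAlphabet A B) →* G × G' :=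
  FreeMonoid.lift fun c =>
    match c with
    | Sum.inl (a, b) => (π₁ (FreeMonoid.of a), π₂ (FreeMonoid.of b))
    | Sum.inr (Sum.inl a) => (π₁ (FreeMonoid.of a), 1)
    | Sum.inr (Sum.inr b) => (1, π₂ (FreeMonoid.of b))

/-- A group is automatic if it admits an automatic structure over some finite alphabet. -/
def IsAutomaticGroup (G : Type*) [Group G] : Prop :=
  ∃ (A : Type) (_ : Fintype A) (π : FreeMonoid A →* G) (L : Language A),
    IsAutomaticStructure π L

end Auto

open Auto

section AuxLemmas

open Auto

variable {A B G G₁ G₂ : Type*} [Group G] [Group G₁] [Group G₂]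

lemma evalW_nil (π : FreeMonoid A →* G) : evalW π ([] : List A) = 1 := by
  simp [evalW, FreeMonoid.ofList_nil]

lemma evalW_cons (π : FreeMonoid A →* G) (a : A) (w : List A) :
    evalW π (a :: w) = π (FreeMonoid.of a) * evalW π w := by
  simp [evalW, FreeMonoid.ofList_cons, map_mul]

lemma evalW_append (π : FreeMonoid A →* G) (u v : List A) :
    evalW π (u ++ v) = evalW π u * evalW π v := by
  simp [evalW, FreeMonoid.ofList_append, map_mul]

lemma prod_map_eval (π : FreeMonoid A →* G) (w : List A) :
    (w.map fun a => π (FreeMonoid.of a)).prod = evalW π w := by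
  induction w with
  | nil => simp [evalW_nil]
  | cons a w ih => simp [evalW_cons, ih]

lemma wdist_set_nonempty (π : FreeMonoid A →* G) (hπ : Function.Surjective π) (g h : G) :
    {n : ℕ | ∃ l : List G, l.length = n ∧ (∀ x ∈ l, x ∈ gens π) ∧ l.prod = g⁻¹ * h}.Nonempty := by
  obtain ⟨w, hw⟩ := hπ (g⁻¹ * h)
  refine ⟨((FreeMonoid.toList w).map fun a => π (FreeMonoid.of a)).length,
    (FreeMonoid.toList w).map fun a => π (FreeMonoid.of a), rfl, ?_, ?_⟩
  · intro x hx
    simp only [List.mem_map] at hx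
    obtain ⟨a, _, rfl⟩ := hx
    exact Or.inl ⟨a, rfl⟩
  · rw [prod_map_eval]
    simpa [evalW, FreeMonoid.ofList_toList] using hw

lemma wdist_le (π : FreeMonoid A →* G) {g h : G} {n : ℕ} (l : List G)
    (hl : ∀ x ∈ l, x ∈ gens π) (hp : l.prod = g⁻¹ * h) (hn : l.length ≤ n) :
    wdist π g h ≤ n :=
  le_trans (Nat.sInf_le ⟨l, rfl, hl, hp⟩) hn

lemma wdist_spec (π : FreeMonoid A →* G) (hπ : Function.Surjective π) (g h : G) :
    ∃ l : List G, l.length = wdist π g h ∧ (∀ x ∈ l, x ∈ gens π) ∧ l.prod = g⁻¹ * h :=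
  Nat.sInf_mem (wdist_set_nonempty π hπ g h)

lemma convHom_of_inl (π₁ : FreeMonoid A →* G₁) (π₂ : FreeMonoid B →* G₂) (a : A) (b : B) :
    convHom π₁ π₂ (FreeMonoid.of (Sum.inl (a, b))) = (π₁ (FreeMonoid.of a), π₂ (FreeMonoid.of b)) := by
  simp [convHom]

lemma convHom_of_inra (π₁ : FreeMonoid A →* G₁) (π₂ : FreeMonoid B →* G₂) (a : A) :
    convHom π₁ π₂ (FreeMonoid.of (Sum.inr (Sum.inl a))) = (π₁ (FreeMonoid.of a), 1) := by
  simp [convHom]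

lemma convHom_of_inrb (π₁ : FreeMonoid A →* G₁) (π₂ : FreeMonoid B →* G₂) (b : B) :
    convHom π₁ π₂ (FreeMonoid.of (Sum.inr (Sum.inr b))) = (1, π₂ (FreeMonoid.of b)) := by
  simp [convHom]

lemma convHom_surjective (π₁ : FreeMonoid A →* G₁) (hπ₁ : Function.Surjective π₁)
    (π₂ : FreeMonoid B →* G₂) (hπ₂ : Function.Surjective π₂) :
    Function.Surjective (convHom π₁ π₂) := by
  have keyA : ∀ u : List A,
      evalW (convHom π₁ π₂) (u.map (fun a => Sum.inr (Sum.inl a))) = (evalW π₁ u, 1) := by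
    intro u
    induction u with
    | nil => simp [evalW_nil]; rfl
    | cons a u ih =>
        rw [List.map_cons, evalW_cons, ih, convHom_of_inra, evalW_cons, Prod.mk_mul_mk, one_mul]
  have keyB : ∀ v : List B,
      evalW (convHom π₁ π₂) (v.map (fun b => Sum.inr (Sum.inr b))) = (1, evalW π₂ v) := by
    intro v
    induction v with
    | nil => simp [evalW_nil]; rfl
    | cons b v ih =>
        rw [List.map_cons, evalW_cons, ih, convHom_of_inrb, evalW_cons, Prod.mk_mul_mk, one_mul]
  rintro ⟨g, h⟩
  obtain ⟨w₁, hw₁⟩ := hπ₁ g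
  obtain ⟨w₂, hw₂⟩ := hπ₂ h
  refine ⟨FreeMonoid.ofList (((FreeMonoid.toList w₁).map fun a => Sum.inr (Sum.inl a)) ++
    ((FreeMonoid.toList w₂).map fun b => Sum.inr (Sum.inr b))), ?_⟩
  show evalW (convHom π₁ π₂) _ = _
  rw [evalW_append, keyA, keyB, Prod.mk_mul_mk, mul_one, one_mul]
  rw [show evalW π₁ (FreeMonoid.toList w₁) = π₁ w₁ from rfl,
    show evalW π₂ (FreeMonoid.toList w₂) = π₂ w₂ from rfl, hw₁, hw₂]

lemma fst_of_gens {π₁ : FreeMonoid A →* G₁} {π₂ : FreeMonoid B →* G₂} {x : G₁ × G₂}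
    (hx : x ∈ gens (convHom π₁ π₂)) : x.1 ∈ gens π₁ ∨ x.1 = 1 := by
  rcases hx with ⟨c, rfl⟩ | ⟨c, rfl⟩
  · rcases c with ⟨a, b⟩ | a | b
    · simp only [convHom_of_inl]; exact Or.inl (Or.inl ⟨a, rfl⟩)
    · simp only [convHom_of_inra]; exact Or.inl (Or.inl ⟨a, rfl⟩)
    · simp only [convHom_of_inrb]; exact Or.inr (by simp)
  · rcases c with ⟨a, b⟩ | a | b
    · simp only [convHom_of_inl]; exact Or.inl (Or.inr ⟨a, rfl⟩)
    · simp only [convHom_of_inra]; exact Or.inl (Or.inr ⟨a, rfl⟩)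
    · simp only [convHom_of_inrb]; exact Or.inr inv_one

lemma snd_of_gens {π₁ : FreeMonoid A →* G₁} {π₂ : FreeMonoid B →* G₂} {x : G₁ × G₂}
    (hx : x ∈ gens (convHom π₁ π₂)) : x.2 ∈ gens π₂ ∨ x.2 = 1 := by
  rcases hx with ⟨c, rfl⟩ | ⟨c, rfl⟩
  · rcases c with ⟨a, b⟩ | a | b
    · simp only [convHom_of_inl]; exact Or.inl (Or.inl ⟨b, rfl⟩)
    · simp only [convHom_of_inra]; exact Or.inr (by simp)
    · simp only [convHom_of_inrb]; exact Or.inl (Or.inl ⟨b, rfl⟩)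
  · rcases c with ⟨a, b⟩ | a | b
    · simp only [convHom_of_inl]; exact Or.inl (Or.inr ⟨b, rfl⟩)
    · simp only [convHom_of_inra]; exact Or.inr inv_one
    · simp only [convHom_of_inrb]; exact Or.inl (Or.inr ⟨b, rfl⟩)

lemma list_fst {π₁ : FreeMonoid A →* G₁} {π₂ : FreeMonoid B →* G₂} :
    ∀ l : List (G₁ × G₂), (∀ x ∈ l, x ∈ gens (convHom π₁ π₂)) →
      ∃ l₁ : List G₁, l₁.length ≤ l.length ∧ (∀ x ∈ l₁, x ∈ gens π₁) ∧ l₁.prod = l.prod.1 := by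
  intro l
  induction l with
  | nil => intro _; exact ⟨[], by simp, by simp, by simp⟩
  | cons x l ih =>
      intro hl
      obtain ⟨l₁, hlen, hmem, hprod⟩ := ih fun y hy => hl y (List.mem_cons_of_mem _ hy)
      rcases fst_of_gens (hl x List.mem_cons_self) with hx | hx
      · refine ⟨x.1 :: l₁, by simpa using Nat.succ_le_succ hlen, ?_, by simp [hprod]⟩
        intro y hy
        rcases List.mem_cons.1 hy with rfl | hy
        · exact hx
        · exact hmem y hy
      · exact ⟨l₁, le_trans hlen (Nat.le_succ _), hmem, by simp [hprod, hx]⟩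

lemma list_snd {π₁ : FreeMonoid A →* G₁} {π₂ : FreeMonoid B →* G₂} :
    ∀ l : List (G₁ × G₂), (∀ x ∈ l, x ∈ gens (convHom π₁ π₂)) →
      ∃ l₂ : List G₂, l₂.length ≤ l.length ∧ (∀ x ∈ l₂, x ∈ gens π₂) ∧ l₂.prod = l.prod.2 := by
  intro l
  induction l with
  | nil => intro _; exact ⟨[], by simp, by simp, by simp⟩
  | cons x l ih =>
      intro hl
      obtain ⟨l₂, hlen, hmem, hprod⟩ := ih fun y hy => hl y (List.mem_cons_of_mem _ hy)
      rcases snd_of_gens (hl x List.mem_cons_self) with hx | hx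
      · refine ⟨x.2 :: l₂, by simpa using Nat.succ_le_succ hlen, ?_, by simp [hprod]⟩
        intro y hy
        rcases List.mem_cons.1 hy with rfl | hy
        · exact hx
        · exact hmem y hy
      · exact ⟨l₂, le_trans hlen (Nat.le_succ _), hmem, by simp [hprod, hx]⟩

lemma wdist_fst_le (π₁ : FreeMonoid A →* G₁) (hπ₁ : Function.Surjective π₁)
    (π₂ : FreeMonoid B →* G₂) (hπ₂ : Function.Surjective π₂) (g h : G₁ × G₂) :
    wdist π₁ g.1 h.1 ≤ wdist (convHom π₁ π₂) g h := by
  obtain ⟨l, hlen, hmem, hprod⟩ :=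
    wdist_spec (convHom π₁ π₂) (convHom_surjective π₁ hπ₁ π₂ hπ₂) g h
  obtain ⟨l₁, hlen₁, hmem₁, hprod₁⟩ := list_fst l hmem
  exact wdist_le π₁ l₁ hmem₁ (by rw [hprod₁, hprod]; rfl) (hlen ▸ hlen₁)

lemma wdist_snd_le (π₁ : FreeMonoid A →* G₁) (hπ₁ : Function.Surjective π₁)
    (π₂ : FreeMonoid B →* G₂) (hπ₂ : Function.Surjective π₂) (g h : G₁ × G₂) :
    wdist π₂ g.2 h.2 ≤ wdist (convHom π₁ π₂) g h := by
  obtain ⟨l, hlen, hmem, hprod⟩ :=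
    wdist_spec (convHom π₁ π₂) (convHom_surjective π₁ hπ₁ π₂ hπ₂) g h
  obtain ⟨l₂, hlen₂, hmem₂, hprod₂⟩ := list_snd l hmem
  exact wdist_le π₂ l₂ hmem₂ (by rw [hprod₂, hprod]; rfl) (hlen ▸ hlen₂)

lemma prod_map_pair_one (l : List G₁) :
    (l.map fun x => ((x, 1) : G₁ × G₂)).prod = (l.prod, 1) := by
  induction l with
  | nil => simp; rfl
  | cons x l ih => simp [ih]

lemma prod_map_one_pair (l : List G₂) :
    (l.map fun x => ((1, x) : G₁ × G₂)).prod = (1, l.prod) := by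
  induction l with
  | nil => simp; rfl
  | cons x l ih => simp [ih]

lemma pair_one_mem_gens {π₁ : FreeMonoid A →* G₁} {π₂ : FreeMonoid B →* G₂} {x : G₁}
    (hx : x ∈ gens π₁) : ((x, 1) : G₁ × G₂) ∈ gens (convHom π₁ π₂) := by
  rcases hx with ⟨a, rfl⟩ | ⟨a, rfl⟩
  · exact Or.inl ⟨Sum.inr (Sum.inl a), (convHom_of_inra π₁ π₂ a).symm⟩
  · refine Or.inr ⟨Sum.inr (Sum.inl a), ?_⟩
    show ((convHom π₁ π₂) (FreeMonoid.of (Sum.inr (Sum.inl a))))⁻¹ = _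
    rw [convHom_of_inra, Prod.inv_mk, inv_one]

lemma one_pair_mem_gens {π₁ : FreeMonoid A →* G₁} {π₂ : FreeMonoid B →* G₂} {x : G₂}
    (hx : x ∈ gens π₂) : ((1, x) : G₁ × G₂) ∈ gens (convHom π₁ π₂) := by
  rcases hx with ⟨b, rfl⟩ | ⟨b, rfl⟩
  · exact Or.inl ⟨Sum.inr (Sum.inr b), (convHom_of_inrb π₁ π₂ b).symm⟩
  · refine Or.inr ⟨Sum.inr (Sum.inr b), ?_⟩
    show ((convHom π₁ π₂) (FreeMonoid.of (Sum.inr (Sum.inr b))))⁻¹ = _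
    rw [convHom_of_inrb, Prod.inv_mk, inv_one]

lemma wdist_pair_le (π₁ : FreeMonoid A →* G₁) (hπ₁ : Function.Surjective π₁)
    (π₂ : FreeMonoid B →* G₂) (hπ₂ : Function.Surjective π₂) (g h : G₁ × G₂) :
    wdist (convHom π₁ π₂) g h ≤ wdist π₁ g.1 h.1 + wdist π₂ g.2 h.2 := by
  obtain ⟨l₁, hlen₁, hmem₁, hprod₁⟩ := wdist_spec π₁ hπ₁ g.1 h.1
  obtain ⟨l₂, hlen₂, hmem₂, hprod₂⟩ := wdist_spec π₂ hπ₂ g.2 h.2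
  refine wdist_le (convHom π₁ π₂)
    ((l₁.map fun x => ((x, 1) : G₁ × G₂)) ++ (l₂.map fun x => ((1, x) : G₁ × G₂))) ?_ ?_ ?_
  · intro x hx
    rcases List.mem_append.1 hx with hx | hx <;> simp only [List.mem_map] at hx
    · obtain ⟨y, hy, rfl⟩ := hx; exact pair_one_mem_gens (hmem₁ y hy)
    · obtain ⟨y, hy, rfl⟩ := hx; exact one_pair_mem_gens (hmem₂ y hy)
  · rw [List.prod_append, prod_map_pair_one, prod_map_one_pair, hprod₁, hprod₂,
      Prod.mk_mul_mk, mul_one, one_mul]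
    exact Prod.ext rfl rfl
  · simp [hlen₁, hlen₂]

lemma conv_nil_nil : conv ([] : List A) ([] : List B) = [] := by simp [conv]

lemma conv_nil_cons (b : B) (v : List B) :
    conv ([] : List A) (b :: v) = Sum.inr (Sum.inr b) :: conv [] v := by simp [conv]

lemma conv_cons_nil (a : A) (u : List A) :
    conv (a :: u) ([] : List B) = Sum.inr (Sum.inl a) :: conv u [] := by simp [conv]

lemma conv_cons_cons (a : A) (u : List A) (b : B) (v : List B) :
    conv (a :: u) (b :: v) = Sum.inl (a, b) :: conv u v := by simp [conv]

lemma conv_take : ∀ (u : List A) (v : List B) (n : ℕ),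
    (conv u v).take n = conv (u.take n) (v.take n)
  | [], [], n => by simp [conv_nil_nil]
  | [], b :: v, 0 => by simp [conv_nil_nil]
  | [], b :: v, n + 1 => by
      rw [conv_nil_cons, List.take_succ_cons, List.take_nil, conv_take [] v n,
        List.take_succ_cons, conv_nil_cons]
      rw [List.take_nil]
  | a :: u, [], 0 => by simp [conv_nil_nil]
  | a :: u, [], n + 1 => by
      rw [conv_cons_nil, List.take_succ_cons, List.take_nil, conv_take u [] n,
        List.take_succ_cons, conv_cons_nil]
      rw [List.take_nil]
  | a :: u, b :: v, 0 => by simp [conv_nil_nil]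
  | a :: u, b :: v, n + 1 => by
      rw [conv_cons_cons, List.take_succ_cons, conv_take u v n, List.take_succ_cons,
        List.take_succ_cons, conv_cons_cons]
  termination_by u v _ => u.length + v.length

lemma evalW_conv (π₁ : FreeMonoid A →* G₁) (π₂ : FreeMonoid B →* G₂) :
    ∀ (u : List A) (v : List B),
      evalW (convHom π₁ π₂) (conv u v) = (evalW π₁ u, evalW π₂ v)
  | [], [] => by
      rw [conv_nil_nil, evalW_nil, evalW_nil, evalW_nil]; exact Prod.ext rfl rfl
  | [], b :: v => by
      rw [conv_nil_cons, evalW_cons, evalW_conv π₁ π₂ [] v, convHom_of_inrb, evalW_cons,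
        Prod.mk_mul_mk, one_mul]
  | a :: u, [] => by
      rw [conv_cons_nil, evalW_cons, evalW_conv π₁ π₂ u [], convHom_of_inra, evalW_cons,
        Prod.mk_mul_mk, one_mul]
  | a :: u, b :: v => by
      rw [conv_cons_cons, evalW_cons, evalW_conv π₁ π₂ u v, convHom_of_inl, evalW_cons,
        evalW_cons, Prod.mk_mul_mk]
  termination_by u v => u.length + v.length

/-- The product DFA accepting the convolution language. -/
def convDFA {σ₁ σ₂ : Type} (M₁ : DFA A σ₁) (M₂ : DFA B σ₂) :
    DFA (ConvAlphabet A B) (Option (σ₁ × σ₂ × Fin 3)) where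
  step s c :=
    match s, c with
    | none, _ => none
    | some (s₁, s₂, m), Sum.inl (a, b) =>
        if m = 0 then some (M₁.step s₁ a, M₂.step s₂ b, 0) else none
    | some (s₁, s₂, m), Sum.inr (Sum.inl a) =>
        if m = 0 ∨ m = 1 then some (M₁.step s₁ a, s₂, 1) else none
    | some (s₁, s₂, m), Sum.inr (Sum.inr b) =>
        if m = 0 ∨ m = 2 then some (s₁, M₂.step s₂ b, 2) else none
  start := some (M₁.start, M₂.start, 0)
  accept := {s | ∃ t₁ ∈ M₁.accept, ∃ t₂ ∈ M₂.accept, ∃ m, s = some (t₁, t₂, m)}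

section ConvDFA

variable {σ₁ σ₂ : Type} (M₁ : DFA A σ₁) (M₂ : DFA B σ₂)

lemma DFA.evalFrom_cons' {α σ : Type*} (M : DFA α σ) (s : σ) (c : α) (w : List α) :
    M.evalFrom s (c :: w) = M.evalFrom (M.step s c) w := rfl

lemma convDFA_step_none (c : ConvAlphabet A B) :
    (convDFA M₁ M₂).step none c = none := rfl

lemma step0_pair (s₁ : σ₁) (s₂ : σ₂) (a : A) (b : B) :
    (convDFA M₁ M₂).step (some (s₁, s₂, 0)) (Sum.inl (a, b)) =
      some (M₁.step s₁ a, M₂.step s₂ b, 0) := rfl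

lemma step0_a (s₁ : σ₁) (s₂ : σ₂) (a : A) :
    (convDFA M₁ M₂).step (some (s₁, s₂, 0)) (Sum.inr (Sum.inl a)) =
      some (M₁.step s₁ a, s₂, 1) := rfl

lemma step0_b (s₁ : σ₁) (s₂ : σ₂) (b : B) :
    (convDFA M₁ M₂).step (some (s₁, s₂, 0)) (Sum.inr (Sum.inr b)) =
      some (s₁, M₂.step s₂ b, 2) := rfl

lemma step1_pair (s₁ : σ₁) (s₂ : σ₂) (a : A) (b : B) :
    (convDFA M₁ M₂).step (some (s₁, s₂, 1)) (Sum.inl (a, b)) = none := rfl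

lemma step1_a (s₁ : σ₁) (s₂ : σ₂) (a : A) :
    (convDFA M₁ M₂).step (some (s₁, s₂, 1)) (Sum.inr (Sum.inl a)) =
      some (M₁.step s₁ a, s₂, 1) := rfl

lemma step1_b (s₁ : σ₁) (s₂ : σ₂) (b : B) :
    (convDFA M₁ M₂).step (some (s₁, s₂, 1)) (Sum.inr (Sum.inr b)) = none := rfl

lemma step2_pair (s₁ : σ₁) (s₂ : σ₂) (a : A) (b : B) :
    (convDFA M₁ M₂).step (some (s₁, s₂, 2)) (Sum.inl (a, b)) = none := rfl

lemma step2_a (s₁ : σ₁) (s₂ : σ₂) (a : A) :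
    (convDFA M₁ M₂).step (some (s₁, s₂, 2)) (Sum.inr (Sum.inl a)) = none := rfl

lemma step2_b (s₁ : σ₁) (s₂ : σ₂) (b : B) :
    (convDFA M₁ M₂).step (some (s₁, s₂, 2)) (Sum.inr (Sum.inr b)) =
      some (s₁, M₂.step s₂ b, 2) := rfl

lemma convDFA_none : ∀ w : List (ConvAlphabet A B),
    (convDFA M₁ M₂).evalFrom none w = none := by
  intro w
  induction w with
  | nil => rfl
  | cons c w ih => rw [DFA.evalFrom_cons', convDFA_step_none]; exact ih

lemma convDFA_run1 : ∀ (u : List A) (s₁ : σ₁) (s₂ : σ₂),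
    (convDFA M₁ M₂).evalFrom (some (s₁, s₂, 1)) (conv u ([] : List B)) =
      some (M₁.evalFrom s₁ u, s₂, 1) := by
  intro u
  induction u with
  | nil => intro s₁ s₂; rw [conv_nil_nil]; rfl
  | cons a u ih =>
      intro s₁ s₂
      rw [conv_cons_nil, DFA.evalFrom_cons', step1_a]
      exact ih (M₁.step s₁ a) s₂

lemma convDFA_run2 : ∀ (v : List B) (s₁ : σ₁) (s₂ : σ₂),
    (convDFA M₁ M₂).evalFrom (some (s₁, s₂, 2)) (conv ([] : List A) v) =
      some (s₁, M₂.evalFrom s₂ v, 2) := by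
  intro v
  induction v with
  | nil => intro s₁ s₂; rw [conv_nil_nil]; rfl
  | cons b v ih =>
      intro s₁ s₂
      rw [conv_nil_cons, DFA.evalFrom_cons', step2_b]
      exact ih s₁ (M₂.step s₂ b)

lemma convDFA_run0 : ∀ (u : List A) (v : List B) (s₁ : σ₁) (s₂ : σ₂),
    ∃ m : Fin 3, (convDFA M₁ M₂).evalFrom (some (s₁, s₂, 0)) (conv u v) =
      some (M₁.evalFrom s₁ u, M₂.evalFrom s₂ v, m)
  | [], [], s₁, s₂ => ⟨0, by rw [conv_nil_nil]; rfl⟩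
  | [], b :: v, s₁, s₂ => by
      refine ⟨2, ?_⟩
      rw [conv_nil_cons, DFA.evalFrom_cons', step0_b]
      exact convDFA_run2 M₁ M₂ v s₁ (M₂.step s₂ b)
  | a :: u, [], s₁, s₂ => by
      refine ⟨1, ?_⟩
      rw [conv_cons_nil, DFA.evalFrom_cons', step0_a]
      exact convDFA_run1 M₁ M₂ u (M₁.step s₁ a) s₂
  | a :: u, b :: v, s₁, s₂ => by
      obtain ⟨m, hm⟩ := convDFA_run0 u v (M₁.step s₁ a) (M₂.step s₂ b)
      refine ⟨m, ?_⟩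
      rw [conv_cons_cons, DFA.evalFrom_cons', step0_pair]
      exact hm

lemma convDFA_back1 : ∀ (w : List (ConvAlphabet A B)) (s₁ : σ₁) (s₂ : σ₂)
    (out : σ₁ × σ₂ × Fin 3),
    (convDFA M₁ M₂).evalFrom (some (s₁, s₂, 1)) w = some out →
      ∃ u : List A, w = conv u ([] : List B) ∧ out.1 = M₁.evalFrom s₁ u ∧ out.2.1 = s₂ := by
  intro w
  induction w with
  | nil =>
      intro s₁ s₂ out h
      rw [DFA.evalFrom_nil] at h
      cases h
      exact ⟨[], conv_nil_nil.symm, rfl, rfl⟩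
  | cons c w ih =>
      intro s₁ s₂ out h
      rcases c with ⟨a, b⟩ | a | b
      · rw [DFA.evalFrom_cons', step1_pair, convDFA_none] at h
        cases h
      · rw [DFA.evalFrom_cons', step1_a] at h
        obtain ⟨u, hu, h1, h2⟩ := ih (M₁.step s₁ a) s₂ out h
        exact ⟨a :: u, by rw [conv_cons_nil, hu], h1, h2⟩
      · rw [DFA.evalFrom_cons', step1_b, convDFA_none] at h
        cases h

lemma convDFA_back2 : ∀ (w : List (ConvAlphabet A B)) (s₁ : σ₁) (s₂ : σ₂)
    (out : σ₁ × σ₂ × Fin 3),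
    (convDFA M₁ M₂).evalFrom (some (s₁, s₂, 2)) w = some out →
      ∃ v : List B, w = conv ([] : List A) v ∧ out.1 = s₁ ∧ out.2.1 = M₂.evalFrom s₂ v := by
  intro w
  induction w with
  | nil =>
      intro s₁ s₂ out h
      rw [DFA.evalFrom_nil] at h
      cases h
      exact ⟨[], conv_nil_nil.symm, rfl, rfl⟩
  | cons c w ih =>
      intro s₁ s₂ out h
      rcases c with ⟨a, b⟩ | a | b
      · rw [DFA.evalFrom_cons', step2_pair, convDFA_none] at h
        cases h
      · rw [DFA.evalFrom_cons', step2_a, convDFA_none] at h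
        cases h
      · rw [DFA.evalFrom_cons', step2_b] at h
        obtain ⟨v, hv, h1, h2⟩ := ih s₁ (M₂.step s₂ b) out h
        exact ⟨b :: v, by rw [conv_nil_cons, hv], h1, h2⟩

lemma convDFA_back0 : ∀ (w : List (ConvAlphabet A B)) (s₁ : σ₁) (s₂ : σ₂)
    (out : σ₁ × σ₂ × Fin 3),
    (convDFA M₁ M₂).evalFrom (some (s₁, s₂, 0)) w = some out →
      ∃ (u : List A) (v : List B), w = conv u v ∧
        out.1 = M₁.evalFrom s₁ u ∧ out.2.1 = M₂.evalFrom s₂ v := by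
  intro w
  induction w with
  | nil =>
      intro s₁ s₂ out h
      rw [DFA.evalFrom_nil] at h
      cases h
      exact ⟨[], [], conv_nil_nil.symm, rfl, rfl⟩
  | cons c w ih =>
      intro s₁ s₂ out h
      rcases c with ⟨a, b⟩ | a | b
      · rw [DFA.evalFrom_cons', step0_pair] at h
        obtain ⟨u, v, huv, h1, h2⟩ := ih (M₁.step s₁ a) (M₂.step s₂ b) out h
        exact ⟨a :: u, b :: v, by rw [conv_cons_cons, huv], h1, h2⟩
      · rw [DFA.evalFrom_cons', step0_a] at h
        obtain ⟨u, hu, h1, h2⟩ := convDFA_back1 M₁ M₂ w (M₁.step s₁ a) s₂ out h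
        exact ⟨a :: u, [], by rw [conv_cons_nil, hu], h1, h2⟩
      · rw [DFA.evalFrom_cons', step0_b] at h
        obtain ⟨v, hv, h1, h2⟩ := convDFA_back2 M₁ M₂ w s₁ (M₂.step s₂ b) out h
        exact ⟨[], b :: v, by rw [conv_nil_cons, hv], h1, h2⟩

end ConvDFA

lemma convLang_regular (L₁ : Language A) (L₂ : Language B)
    (h₁ : Auto.IsRegular L₁) (h₂ : Auto.IsRegular L₂) : Auto.IsRegular (convLang L₁ L₂) := by
  obtain ⟨σ₁, i₁, M₁, hM₁⟩ := h₁
  obtain ⟨σ₂, i₂, M₂, hM₂⟩ := h₂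
  refine ⟨Option (σ₁ × σ₂ × Fin 3), by infer_instance, convDFA M₁ M₂, ?_⟩
  ext w
  rw [DFA.mem_accepts]
  constructor
  · intro hw
    obtain ⟨t₁, ht₁, t₂, ht₂, m, hm⟩ := hw
    obtain ⟨u, v, huv, hu1, hv1⟩ := convDFA_back0 M₁ M₂ w M₁.start M₂.start (t₁, t₂, m) hm
    refine ⟨u, ?_, v, ?_, huv⟩
    · have : u ∈ M₁.accepts := by rw [DFA.mem_accepts]; show M₁.evalFrom M₁.start u ∈ _; rw [← hu1]; exact ht₁
      rwa [hM₁] at this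
    · have : v ∈ M₂.accepts := by rw [DFA.mem_accepts]; show M₂.evalFrom M₂.start v ∈ _; rw [← hv1]; exact ht₂
      rwa [hM₂] at this
  · rintro ⟨u, hu, v, hv, rfl⟩
    obtain ⟨m, hm⟩ := convDFA_run0 M₁ M₂ u v M₁.start M₂.start
    show (convDFA M₁ M₂).evalFrom (convDFA M₁ M₂).start (conv u v) ∈ _
    rw [show (convDFA M₁ M₂).start = some (M₁.start, M₂.start, 0) from rfl, hm]
    refine ⟨M₁.evalFrom M₁.start u, ?_, M₂.evalFrom M₂.start v, ?_, m, rfl⟩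
    · rw [← hM₁] at hu; exact hu
    · rw [← hM₂] at hv; exact hv

/-- Transport of automatic structures along a bijection of alphabets. -/
lemma transport_automatic {A' : Type*} (e : A ≃ A') (π : FreeMonoid A →* G) (L : Language A)
    (h : IsAutomaticStructure π L) :
    IsAutomaticStructure (π.comp (FreeMonoid.map e.symm)) {w : List A' | w.map e.symm ∈ L} := by
  set π' := π.comp (FreeMonoid.map e.symm) with hπ'
  have hof : ∀ a' : A', π' (FreeMonoid.of a') = π (FreeMonoid.of (e.symm a')) := by
    intro a'; simp [hπ', FreeMonoid.map_of]
  have heval : ∀ w : List A', evalW π' w = evalW π (w.map e.symm) := by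
    intro w
    rfl
  have hgens : gens π' = gens π := by
    unfold gens
    congr 1
    · ext x
      constructor
      · rintro ⟨a', rfl⟩; exact ⟨e.symm a', (hof a').symm⟩
      · rintro ⟨a, rfl⟩; exact ⟨e a, by simp [hof]⟩
    · ext x
      constructor
      · rintro ⟨a', rfl⟩; exact ⟨e.symm a', by simp [hof]⟩
      · rintro ⟨a, rfl⟩; exact ⟨e a, by simp [hof]⟩
  have hwdist : ∀ g h : G, wdist π' g h = wdist π g h := by
    intro g h; unfold wdist; rw [hgens]
  constructor
  · obtain ⟨σ, iσ, M, hM⟩ := h.regular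
    refine ⟨σ, iσ, ⟨fun s a' => M.step s (e.symm a'), M.start, M.accept⟩, ?_⟩
    have hev : ∀ (w : List A') (s : σ),
        DFA.evalFrom ⟨fun s a' => M.step s (e.symm a'), M.start, M.accept⟩ s w =
          M.evalFrom s (w.map e.symm) := by
      intro w
      induction w with
      | nil => intro s; rfl
      | cons a' w ih => intro s; exact ih (M.step s (e.symm a'))
    ext w
    rw [DFA.mem_accepts]
    show (DFA.evalFrom _ _ w ∈ M.accept) ↔ _
    rw [hev]
    have : w.map e.symm ∈ M.accepts ↔ w.map e.symm ∈ L := by rw [hM]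
    exact this
  · intro g
    obtain ⟨w, hw, hwg⟩ := h.onto g
    refine ⟨w.map e, ?_, ?_⟩
    · show (w.map e).map e.symm ∈ L
      simpa using hw
    · rw [heval]
      simpa using hwg
  · obtain ⟨N, hN⟩ := h.ft
    refine ⟨N, ?_⟩
    intro u hu v hv hle n
    have hu' : u.map e.symm ∈ L := hu
    have hv' : v.map e.symm ∈ L := hv
    have hle' : wdist π (evalW π (u.map e.symm)) (evalW π (v.map e.symm)) ≤ 1 := by
      rw [← heval, ← heval, ← hwdist]; exact hle
    have := hN (u.map e.symm) hu' (v.map e.symm) hv' hle' n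
    rw [hwdist, heval, heval, List.map_take, List.map_take]
    exact this

end AuxLemmas

/-- The convolution `L₁ ⋄ L₂` is an automatic structure for the natural map
`C* → G₁ × G₂`; in particular the direct product of automatic groups is automatic. -/
theorem conv_automatic {A B G₁ G₂ : Type*} [Fintype A] [Fintype B] [Group G₁] [Group G₂]
    (π₁ : FreeMonoid A →* G₁) (hπ₁ : Function.Surjective π₁)
    (π₂ : FreeMonoid B →* G₂) (hπ₂ : Function.Surjective π₂)
    (L₁ : Language A) (L₂ : Language B)
    (h₁ : IsAutomaticStructure π₁ L₁) (h₂ : IsAutomaticStructure π₂ L₂) :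
    IsAutomaticStructure (convHom π₁ π₂) (convLang L₁ L₂) ∧
      IsAutomaticGroup (G₁ × G₂) := by
  have conv_struct : IsAutomaticStructure (convHom π₁ π₂) (convLang L₁ L₂) := by
    constructor
    · exact convLang_regular L₁ L₂ h₁.regular h₂.regular
    · rintro ⟨g₁, g₂⟩
      obtain ⟨u, hu, hug⟩ := h₁.onto g₁
      obtain ⟨v, hv, hvg⟩ := h₂.onto g₂
      exact ⟨conv u v, ⟨u, hu, v, hv, rfl⟩, by rw [evalW_conv, hug, hvg]⟩
    · obtain ⟨N₁, hN₁⟩ := h₁.ft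
      obtain ⟨N₂, hN₂⟩ := h₂.ft
      refine ⟨N₁ + N₂, ?_⟩
      rintro w ⟨u₁, hu₁, u₂, hu₂, rfl⟩ w' ⟨v₁, hv₁, v₂, hv₂, rfl⟩ hle n
      rw [evalW_conv, evalW_conv] at hle
      have hle₁ : wdist π₁ (evalW π₁ u₁) (evalW π₁ v₁) ≤ 1 := by
        have := (wdist_fst_le π₁ hπ₁ π₂ hπ₂ (evalW π₁ u₁, evalW π₂ u₂)
          (evalW π₁ v₁, evalW π₂ v₂)).trans hle
        simpa using this
      have hle₂ : wdist π₂ (evalW π₂ u₂) (evalW π₂ v₂) ≤ 1 := by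
        have := (wdist_snd_le π₁ hπ₁ π₂ hπ₂ (evalW π₁ u₁, evalW π₂ u₂)
          (evalW π₁ v₁, evalW π₂ v₂)).trans hle
        simpa using this
      have h₁n := hN₁ u₁ hu₁ v₁ hv₁ hle₁ n
      have h₂n := hN₂ u₂ hu₂ v₂ hv₂ hle₂ n
      rw [conv_take, conv_take, evalW_conv, evalW_conv]
      have key : wdist (convHom π₁ π₂)
          (evalW π₁ (u₁.take n), evalW π₂ (u₂.take n))
          (evalW π₁ (v₁.take n), evalW π₂ (v₂.take n)) ≤
          wdist π₁ (evalW π₁ (u₁.take n)) (evalW π₁ (v₁.take n)) +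
          wdist π₂ (evalW π₂ (u₂.take n)) (evalW π₂ (v₂.take n)) :=
        wdist_pair_le π₁ hπ₁ π₂ hπ₂ _ _
      calc (wdist (convHom π₁ π₂)
              (evalW π₁ (u₁.take n), evalW π₂ (u₂.take n))
              (evalW π₁ (v₁.take n), evalW π₂ (v₂.take n)) : ℝ≥0) ≤
          (wdist π₁ (evalW π₁ (u₁.take n)) (evalW π₁ (v₁.take n)) : ℝ≥0) +
          (wdist π₂ (evalW π₂ (u₂.take n)) (evalW π₂ (v₂.take n)) : ℝ≥0) := by
            exact_mod_cast Nat.cast_le.mpr key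
        _ ≤ (N₁ : ℝ≥0) + (N₂ : ℝ≥0) := add_le_add h₁n h₂n
        _ = ((N₁ + N₂ : ℕ) : ℝ≥0) := by push_cast; ring
  refine ⟨conv_struct, ?_⟩
  obtain ⟨n, ⟨e⟩⟩ := Finite.exists_equiv_fin (ConvAlphabet A B)
  exact ⟨Fin n, by infer_instance,
    (convHom π₁ π₂).comp (FreeMonoid.map e.symm),
    {w : List (Fin n) | w.map e.symm ∈ convLang L₁ L₂},
    transport_automatic e (convHom π₁ π₂) (convLang L₁ L₂) conv_struct⟩
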